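/- Corollary 4 (second domain adaptation bound specialized to linear classifiers): for any source domain S and target domain T over ℝ^d×{−1,+1} whose marginals satisfy x ≠ 0 almost surely, and for every w ∈ ℝ^d, R_T(h_w) ≤ d_{T_X}(ρ_w) + 2·β_∞·e_S(ρ_w) + 2·η_{T∖S}. -/

import Mathlib

open MeasureTheory

noncomputable section

/-- The 0-1 loss on labels in `{−1,+1}`, encoded by `Bool` (`false ↦ −1`, `true ↦ +1`). -/
def l01 (a b : Bool) : ℝ := if a = b then 0 else 1

/-- The real value of a label: `true ↦ +1`, `false ↦ −1`. -/
def yval (b : Bool) : ℝ := if b then 1 else -1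

variable {d : ℕ}

/-- Dot product on `ℝ^d`. -/
def dotp (w x : Fin d → ℝ) : ℝ := ∑ i, w i * x i

/-- Euclidean norm on `ℝ^d`. -/
def nrm (x : Fin d → ℝ) : ℝ := Real.sqrt (∑ i, x i ^ 2)

open Classical in
/-- The linear classifier `h_w(x) = sign(w·x)` (`true ↦ +1`, `false ↦ −1`). -/
def hlin (w x : Fin d → ℝ) : Bool := if 0 < dotp w x then true else false

/-- The Gaussian measure `γ_w` on `ℝ^d` with mean `w` and identity covariance, given as the
product over coordinates of one-dimensional Gaussians `N(w_i, 1)`. -/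
def gauss (w : Fin d → ℝ) : Measure (Fin d → ℝ) :=
  Measure.pi fun i => ProbabilityTheory.gaussianReal (w i) 1

/-- The standard Gaussian tail function `Φ(z) = (1/√(2π)) ∫_z^∞ e^{−t²/2} dt`. -/
def gaussTail (z : ℝ) : ℝ :=
  ∫ t in Set.Ici z, Real.exp (-t ^ 2 / 2) / Real.sqrt (2 * Real.pi)

/-- The risk `R_P(h_w)` of the linear classifier `h_w` on a domain `P`. -/
def riskLin (P : Measure ((Fin d → ℝ) × Bool)) (w : Fin d → ℝ) : ℝ :=
  ∫ z, l01 (hlin w z.1) z.2 ∂P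

/-- The Gibbs risk `R_P(G_{ρ_w}) = E_{w'~γ_w} E_{(x,y)~P} ℓ(h_{w'}(x),y)`. -/
def gibbsLin (P : Measure ((Fin d → ℝ) × Bool)) (w : Fin d → ℝ) : ℝ :=
  ∫ w', ∫ z, l01 (hlin w' z.1) z.2 ∂P ∂(gauss w)

/-- The expected disagreement `d_{D_X}(ρ_w) = E_{(u,v)~γ_w⊗γ_w} E_{x~D_X} ℓ(h_u(x),h_v(x))`. -/
def expDisagLin (D : Measure (Fin d → ℝ)) (w : Fin d → ℝ) : ℝ :=
  ∫ p, ∫ x, l01 (hlin p.1 x) (hlin p.2 x) ∂D ∂((gauss w).prod (gauss w))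

/-- The expected joint error
`e_P(ρ_w) = E_{(u,v)~γ_w⊗γ_w} E_{(x,y)~P} ℓ(h_u(x),y)·ℓ(h_v(x),y)`. -/
def jointErrLin (P : Measure ((Fin d → ℝ) × Bool)) (w : Fin d → ℝ) : ℝ :=
  ∫ p, ∫ z, l01 (hlin p.1 z.1) z.2 * l01 (hlin p.2 z.1) z.2 ∂P ∂((gauss w).prod (gauss w))

/-- `β_∞`: the `S`-essential supremum of the Radon–Nikodym derivative `dT_A/dS`. -/
def betaInf {d : ℕ} (S T : Measure ((Fin d → ℝ) × Bool)) : ℝ :=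
  (essSup (T.rnDeriv S) S).toReal

/-- `η_{T∖S} = sup_{w'∈ℝ^d} ∫ ℓ(h_{w'}(x),y) dT_⊥(x,y)`, where `T_⊥ = T.singularPart S`. -/
def etaTS {d : ℕ} (S T : Measure ((Fin d → ℝ) × Bool)) : ℝ :=
  ⨆ w' : Fin d → ℝ, ∫ z, l01 (hlin w' z.1) z.2 ∂(T.singularPart S)


open ProbabilityTheory
open scoped ENNReal NNReal

section DAAux
variable {d : ℕ}

lemma l01_nonneg (a b : Bool) : 0 ≤ l01 a b := by unfold l01; split <;> norm_num

lemma l01_le_one (a b : Bool) : l01 a b ≤ 1 := by unfold l01; split <;> norm_num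

lemma l01_key (a b y : Bool) : l01 a b + 2 * (l01 a y * l01 b y) = l01 a y + l01 b y := by
  cases a <;> cases b <;> cases y <;> simp [l01] <;> norm_num

lemma continuous_dotp : Continuous fun q : (Fin d → ℝ) × (Fin d → ℝ) => dotp q.1 q.2 := by
  unfold dotp
  exact continuous_finset_sum _ fun i _ =>
    ((continuous_apply i).comp continuous_fst).mul ((continuous_apply i).comp continuous_snd)

lemma measurable_hlin : Measurable fun q : (Fin d → ℝ) × (Fin d → ℝ) => hlin q.1 q.2 := by
  have hs : MeasurableSet {q : (Fin d → ℝ) × (Fin d → ℝ) | 0 < dotp q.1 q.2} :=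
    measurableSet_lt measurable_const continuous_dotp.measurable
  unfold hlin
  exact Measurable.ite hs measurable_const measurable_const

lemma measurable_l01 {α : Type*} [MeasurableSpace α] {a b : α → Bool}
    (ha : Measurable a) (hb : Measurable b) : Measurable fun x => l01 (a x) (b x) :=
  (measurable_of_countable fun q : Bool × Bool => l01 q.1 q.2).comp (ha.prodMk hb)

variable {d : ℕ}

instance (w : Fin d → ℝ) : IsProbabilityMeasure (gauss w) := by
  unfold gauss; infer_instance

lemma gaussianReal_refl (c : ℝ) :
    MeasurePreserving (fun t : ℝ => 2 * c - t) (gaussianReal c 1) (gaussianReal c 1) := by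
  have hm : Measurable fun t : ℝ => 2 * c - t := measurable_const.sub measurable_id
  refine ⟨hm, ?_⟩
  have h1 : (fun t : ℝ => 2 * c - t) = (fun t : ℝ => t + 2 * c) ∘ (fun t : ℝ => (-1) * t) := by
    funext t; simp; ring
  have h2 : Measure.map ((fun t : ℝ => t + 2 * c) ∘ (fun t : ℝ => (-1) * t)) (gaussianReal c 1)
      = ((gaussianReal c 1).map (fun t : ℝ => (-1) * t)).map (fun t : ℝ => t + 2 * c) :=
    (Measure.map_map (measurable_add_const _) (measurable_const_mul _)).symm
  rw [h1, h2, gaussianReal_map_const_mul, gaussianReal_map_add_const]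
  have hv : (⟨(-1:ℝ)^2, sq_nonneg _⟩ : NNReal) * 1 = 1 := by ext; norm_num
  congr 1
  · ring

lemma gauss_refl (w : Fin d → ℝ) :
    MeasurePreserving (fun u i => 2 * w i - u i) (gauss w) (gauss w) :=
  measurePreserving_pi _ _ fun i => gaussianReal_refl (w i)

variable {d : ℕ}

lemma hlin_true {w x : Fin d → ℝ} : hlin w x = true ↔ 0 < dotp w x := by
  unfold hlin; split <;> simp [*]

lemma measurable_hlin_left (x : Fin d → ℝ) : Measurable fun u : Fin d → ℝ => hlin u x :=
  measurable_hlin.comp (measurable_id.prodMk measurable_const)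

lemma dotp_refl (w u x : Fin d → ℝ) :
    dotp (fun i => 2 * w i - u i) x = 2 * dotp w x - dotp u x := by
  unfold dotp
  rw [Finset.mul_sum, ← Finset.sum_sub_distrib]
  exact Finset.sum_congr rfl fun i _ => by ring

lemma half_meas (w x : Fin d → ℝ) (b : Bool) (hb : hlin w x = b) :
    1 ≤ 2 * gauss w {u | hlin u x = b} := by
  set A : Set (Fin d → ℝ) := {u | hlin u x = b} with hA_def
  have hA : MeasurableSet A := (measurable_hlin_left x) (measurableSet_singleton b)
  have hpre : (fun u i => 2 * w i - u i) ⁻¹' Aᶜ ⊆ A := by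
    intro u hu
    simp only [Set.mem_preimage, Set.mem_compl_iff, hA_def, Set.mem_setOf_eq] at hu ⊢
    cases b with
    | true =>
      have hw : 0 < dotp w x := hlin_true.mp hb
      have h1 : ¬ (0 < dotp (fun i => 2 * w i - u i) x) := by
        intro h; exact hu (hlin_true.mpr h)
      rw [dotp_refl] at h1
      exact hlin_true.mpr (by linarith)
    | false =>
      have hw : ¬ (0 < dotp w x) := fun h => by simp [hlin_true.mpr h] at hb
      have h1 : 0 < dotp (fun i => 2 * w i - u i) x := by
        by_contra h
        exact hu (by revert h; unfold hlin; split <;> simp_all)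
      rw [dotp_refl] at h1
      revert hw
      unfold hlin
      split <;> intro hw
      · linarith
      · simp
  have hcompl : gauss w Aᶜ ≤ gauss w A := by
    calc gauss w Aᶜ = gauss w ((fun u i => 2 * w i - u i) ⁻¹' Aᶜ) :=
          ((gauss_refl w).measure_preimage hA.compl.nullMeasurableSet).symm
      _ ≤ gauss w A := measure_mono hpre
  calc (1 : ℝ≥0∞) = gauss w A + gauss w Aᶜ := by
        rw [measure_add_measure_compl hA]; exact (measure_univ).symm
    _ ≤ gauss w A + gauss w A := by gcongr
    _ = 2 * gauss w A := (two_mul _).symm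

lemma half_int (w x : Fin d → ℝ) (y : Bool) (hy : hlin w x ≠ y) :
    (1 : ℝ) ≤ 2 * ∫ u, l01 (hlin u x) y ∂(gauss w) := by
  set A : Set (Fin d → ℝ) := {u | hlin u x = hlin w x} with hA_def
  have hA : MeasurableSet A := (measurable_hlin_left x) (measurableSet_singleton _)
  have hions : (fun u => l01 (hlin u x) y) = A.indicator (1 : (Fin d → ℝ) → ℝ) := by
    funext u
    by_cases h : hlin u x = y
    · have : ¬ (u ∈ A) := by
        simp only [hA_def, Set.mem_setOf_eq, h]
        exact fun hh => hy hh.symm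
      simp [l01, h, Set.indicator, this]
    · have : u ∈ A := by
        simp only [hA_def, Set.mem_setOf_eq]
        revert h hy; cases hlin u x <;> cases hlin w x <;> cases y <;> simp
      simp [l01, h, Set.indicator, this]
  rw [hions, integral_indicator_one hA]
  have h2 := half_meas w x (hlin w x) rfl
  have hfin : (2 : ℝ≥0∞) * gauss w A ≠ ⊤ := by
    refine ENNReal.mul_ne_top (by norm_num) (measure_ne_top _ _)
  have := ENNReal.toReal_mono hfin h2
  rw [ENNReal.toReal_mul] at this
  simpa [Measure.real] using this

lemma int01 {α : Type*} [MeasurableSpace α] {μ : Measure α} [IsFiniteMeasure μ] {f : α → ℝ}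
    (hm : AEStronglyMeasurable f μ) (h0 : ∀ x, 0 ≤ f x) (h1 : ∀ x, f x ≤ 1) :
    Integrable f μ :=
  (integrable_const 1).mono' hm (ae_of_all _ fun x => by
    rw [Real.norm_eq_abs, abs_of_nonneg (h0 x)]; exact h1 x)

lemma int_fst {α β : Type*} [MeasurableSpace α] [MeasurableSpace β]
    (μ : Measure α) (ν : Measure β) [SFinite μ] [IsProbabilityMeasure ν] {g : α → ℝ}
    (hg : Measurable g) : ∫ p : α × β, g p.1 ∂(μ.prod ν) = ∫ u, g u ∂μ := by
  rw [← integral_map measurable_fst.aemeasurable hg.aestronglyMeasurable,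
    Measure.map_fst_prod, measure_univ, one_smul]

lemma int_snd {α β : Type*} [MeasurableSpace α] [MeasurableSpace β]
    (μ : Measure α) (ν : Measure β) [IsProbabilityMeasure μ] [SFinite ν] {g : β → ℝ}
    (hg : Measurable g) : ∫ p : α × β, g p.2 ∂(μ.prod ν) = ∫ u, g u ∂ν := by
  rw [← integral_map measurable_snd.aemeasurable hg.aestronglyMeasurable,
    Measure.map_snd_prod, measure_univ, one_smul]


end DAAux

set_option maxHeartbeats 2000000

/-- Corollary 4 (second domain adaptation bound specialized to linear classifiers): for any
source `S` and target `T` over `ℝ^d×{−1,+1}` whose marginals satisfy `x ≠ 0` a.s.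
(with `β_∞` assumed finite), and for every `w ∈ ℝ^d`,
`R_T(h_w) ≤ d_{T_X}(ρ_w) + 2·β_∞·e_S(ρ_w) + 2·η_{T∖S}`. -/
theorem second_da_bound_linear (d : ℕ)
    (S T : Measure ((Fin d → ℝ) × Bool)) [IsProbabilityMeasure S] [IsProbabilityMeasure T]
    (hS : ∀ᵐ z ∂S, z.1 ≠ 0) (hT : ∀ᵐ z ∂T, z.1 ≠ 0)
    (hβ : essSup (T.rnDeriv S) S ≠ ⊤)
    (w : Fin d → ℝ) :
    riskLin T w ≤ expDisagLin (T.map Prod.fst) w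
      + 2 * betaInf S T * jointErrLin S w + 2 * etaTS S T := by
  classical
  set γ : Measure (Fin d → ℝ) := gauss w with hγ
  set μ2 : Measure ((Fin d → ℝ) × (Fin d → ℝ)) := γ.prod γ with hμ2
  -- measurability of building blocks
  have mh1 : Measurable fun q : ((Fin d → ℝ) × (Fin d → ℝ)) × ((Fin d → ℝ) × Bool) => hlin q.1.1 q.2.1 :=
    measurable_hlin.comp ((measurable_fst.comp measurable_fst).prodMk
      (measurable_fst.comp measurable_snd))
  have mh2 : Measurable fun q : ((Fin d → ℝ) × (Fin d → ℝ)) × ((Fin d → ℝ) × Bool) => hlin q.1.2 q.2.1 :=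
    measurable_hlin.comp ((measurable_snd.comp measurable_fst).prodMk
      (measurable_fst.comp measurable_snd))
  have my : Measurable fun q : ((Fin d → ℝ) × (Fin d → ℝ)) × ((Fin d → ℝ) × Bool) => q.2.2 :=
    measurable_snd.comp measurable_snd
  have mA : Measurable fun q : ((Fin d → ℝ) × (Fin d → ℝ)) × ((Fin d → ℝ) × Bool) =>
      l01 (hlin q.1.1 q.2.1) (hlin q.1.2 q.2.1) := measurable_l01 mh1 mh2
  have mB : Measurable fun q : ((Fin d → ℝ) × (Fin d → ℝ)) × ((Fin d → ℝ) × Bool) =>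
      l01 (hlin q.1.1 q.2.1) q.2.2 * l01 (hlin q.1.2 q.2.1) q.2.2 :=
    (measurable_l01 mh1 my).mul (measurable_l01 mh2 my)
  have mφ : Measurable fun q : ((Fin d → ℝ) × (Fin d → ℝ)) × ((Fin d → ℝ) × Bool) =>
      l01 (hlin q.1.1 q.2.1) q.2.2 + l01 (hlin q.1.2 q.2.1) q.2.2 :=
    (measurable_l01 mh1 my).add (measurable_l01 mh2 my)
  -- integrability over products with T
  have hAint : Integrable (fun q : ((Fin d → ℝ) × (Fin d → ℝ)) × ((Fin d → ℝ) × Bool) =>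
      l01 (hlin q.1.1 q.2.1) (hlin q.1.2 q.2.1)) (μ2.prod T) :=
    int01 mA.aestronglyMeasurable (fun q => l01_nonneg _ _) (fun q => l01_le_one _ _)
  have hBintT : Integrable (fun q : ((Fin d → ℝ) × (Fin d → ℝ)) × ((Fin d → ℝ) × Bool) =>
      l01 (hlin q.1.1 q.2.1) q.2.2 * l01 (hlin q.1.2 q.2.1) q.2.2) (μ2.prod T) :=
    int01 mB.aestronglyMeasurable
      (fun q => mul_nonneg (l01_nonneg _ _) (l01_nonneg _ _))
      (fun q => mul_le_one₀ (l01_le_one _ _) (l01_nonneg _ _) (l01_le_one _ _))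
  have hBintS : Integrable (fun q : ((Fin d → ℝ) × (Fin d → ℝ)) × ((Fin d → ℝ) × Bool) =>
      l01 (hlin q.1.1 q.2.1) q.2.2 * l01 (hlin q.1.2 q.2.1) q.2.2) (μ2.prod S) :=
    int01 mB.aestronglyMeasurable
      (fun q => mul_nonneg (l01_nonneg _ _) (l01_nonneg _ _))
      (fun q => mul_le_one₀ (l01_le_one _ _) (l01_nonneg _ _) (l01_le_one _ _))
  -- the φ function, uncurried on (z, p)
  have mφ' : Measurable fun q : ((Fin d → ℝ) × Bool) × ((Fin d → ℝ) × (Fin d → ℝ)) =>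
      l01 (hlin q.2.1 q.1.1) q.1.2 + l01 (hlin q.2.2 q.1.1) q.1.2 :=
    mφ.comp measurable_swap
  have hφint : Integrable (fun q : ((Fin d → ℝ) × Bool) × ((Fin d → ℝ) × (Fin d → ℝ)) =>
      l01 (hlin q.2.1 q.1.1) q.1.2 + l01 (hlin q.2.2 q.1.1) q.1.2) (T.prod μ2) :=
    (integrable_const (2:ℝ)).mono' mφ'.aestronglyMeasurable (ae_of_all _ fun q => by
      have h1 := l01_nonneg (hlin q.2.1 q.1.1) q.1.2
      have h2 := l01_nonneg (hlin q.2.2 q.1.1) q.1.2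
      have h3 := l01_le_one (hlin q.2.1 q.1.1) q.1.2
      have h4 := l01_le_one (hlin q.2.2 q.1.1) q.1.2
      rw [Real.norm_eq_abs, abs_of_nonneg (by linarith)]; linarith)
  -- Step 1: pointwise bound
  have step1 : ∀ z : (Fin d → ℝ) × Bool, l01 (hlin w z.1) z.2
      ≤ ∫ p : (Fin d → ℝ) × (Fin d → ℝ), (l01 (hlin p.1 z.1) z.2 + l01 (hlin p.2 z.1) z.2) ∂μ2 := by
    intro z
    have hgm : Measurable fun u : (Fin d → ℝ) => l01 (hlin u z.1) z.2 :=
      measurable_l01 (measurable_hlin.comp (measurable_id.prodMk measurable_const))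
        measurable_const
    have hint1 : Integrable (fun p : (Fin d → ℝ) × (Fin d → ℝ) => l01 (hlin p.1 z.1) z.2) μ2 :=
      int01 (hgm.comp measurable_fst).aestronglyMeasurable
        (fun p => l01_nonneg _ _) (fun p => l01_le_one _ _)
    have hint2 : Integrable (fun p : (Fin d → ℝ) × (Fin d → ℝ) => l01 (hlin p.2 z.1) z.2) μ2 :=
      int01 (hgm.comp measurable_snd).aestronglyMeasurable
        (fun p => l01_nonneg _ _) (fun p => l01_le_one _ _)
    have hsplit : ∫ p : (Fin d → ℝ) × (Fin d → ℝ), (l01 (hlin p.1 z.1) z.2 + l01 (hlin p.2 z.1) z.2) ∂μ2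
        = 2 * ∫ u, l01 (hlin u z.1) z.2 ∂γ := by
      rw [integral_add hint1 hint2]
      rw [hμ2, int_fst γ γ hgm, int_snd γ γ hgm]
      ring
    rw [hsplit]
    by_cases hz : hlin w z.1 = z.2
    · have h0 : l01 (hlin w z.1) z.2 = 0 := by simp [l01, hz]
      rw [h0]
      have : 0 ≤ ∫ u, l01 (hlin u z.1) z.2 ∂γ :=
        integral_nonneg fun u => l01_nonneg _ _
      linarith
    · have h1 : l01 (hlin w z.1) z.2 = 1 := by simp [l01, hz]
      rw [h1]
      exact half_int w z.1 z.2 hz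
  -- Step 2: integrate the pointwise bound over T
  have hfT : Integrable (fun z : (Fin d → ℝ) × Bool => l01 (hlin w z.1) z.2) T :=
    int01 ((measurable_l01 (measurable_hlin.comp (measurable_const.prodMk measurable_fst))
      measurable_snd)).aestronglyMeasurable (fun z => l01_nonneg _ _) (fun z => l01_le_one _ _)
  have hinner_int : Integrable (fun z : (Fin d → ℝ) × Bool =>
      ∫ p : (Fin d → ℝ) × (Fin d → ℝ), (l01 (hlin p.1 z.1) z.2 + l01 (hlin p.2 z.1) z.2) ∂μ2) T :=
    hφint.integral_prod_left
  have step2 : riskLin T w ≤ ∫ z, (∫ p : (Fin d → ℝ) × (Fin d → ℝ),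
      (l01 (hlin p.1 z.1) z.2 + l01 (hlin p.2 z.1) z.2) ∂μ2) ∂T :=
    integral_mono hfT hinner_int step1
  -- Step 3: swap integrals
  have step3 : ∫ z, (∫ p : (Fin d → ℝ) × (Fin d → ℝ),
        (l01 (hlin p.1 z.1) z.2 + l01 (hlin p.2 z.1) z.2) ∂μ2) ∂T
      = ∫ p : (Fin d → ℝ) × (Fin d → ℝ), (∫ z, (l01 (hlin p.1 z.1) z.2 + l01 (hlin p.2 z.1) z.2) ∂T) ∂μ2 :=
    integral_integral_swap hφint
  -- Step 4: rewrite the inner integral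
  have hGm : ∀ p : (Fin d → ℝ) × (Fin d → ℝ), Measurable fun z : (Fin d → ℝ) × Bool => l01 (hlin p.1 z.1) z.2 :=
    fun p => measurable_l01 (measurable_hlin.comp (measurable_const.prodMk measurable_fst))
      measurable_snd
  have hHm : ∀ p : (Fin d → ℝ) × (Fin d → ℝ), Measurable fun z : (Fin d → ℝ) × Bool => l01 (hlin p.2 z.1) z.2 :=
    fun p => measurable_l01 (measurable_hlin.comp (measurable_const.prodMk measurable_fst))
      measurable_snd
  have hABm : ∀ p : (Fin d → ℝ) × (Fin d → ℝ), Measurable fun z : (Fin d → ℝ) × Bool =>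
      l01 (hlin p.1 z.1) (hlin p.2 z.1) :=
    fun p => measurable_l01 (measurable_hlin.comp (measurable_const.prodMk measurable_fst))
      (measurable_hlin.comp (measurable_const.prodMk measurable_fst))
  have hBm : ∀ p : (Fin d → ℝ) × (Fin d → ℝ), Measurable fun z : (Fin d → ℝ) × Bool =>
      l01 (hlin p.1 z.1) z.2 * l01 (hlin p.2 z.1) z.2 := fun p => (hGm p).mul (hHm p)
  have intB : ∀ (P : Measure ((Fin d → ℝ) × Bool)) [IsFiniteMeasure P], ∀ p : (Fin d → ℝ) × (Fin d → ℝ),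
      Integrable (fun z : (Fin d → ℝ) × Bool => l01 (hlin p.1 z.1) z.2 * l01 (hlin p.2 z.1) z.2) P :=
    fun P _ p => int01 (hBm p).aestronglyMeasurable
      (fun z => mul_nonneg (l01_nonneg _ _) (l01_nonneg _ _))
      (fun z => mul_le_one₀ (l01_le_one _ _) (l01_nonneg _ _) (l01_le_one _ _))
  have step4 : ∀ p : (Fin d → ℝ) × (Fin d → ℝ), ∫ z, (l01 (hlin p.1 z.1) z.2 + l01 (hlin p.2 z.1) z.2) ∂T
      = ∫ z, l01 (hlin p.1 z.1) (hlin p.2 z.1) ∂T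
        + 2 * ∫ z, l01 (hlin p.1 z.1) z.2 * l01 (hlin p.2 z.1) z.2 ∂T := by
    intro p
    have hcong : (fun z : (Fin d → ℝ) × Bool => l01 (hlin p.1 z.1) z.2 + l01 (hlin p.2 z.1) z.2)
        = fun z => l01 (hlin p.1 z.1) (hlin p.2 z.1)
          + 2 * (l01 (hlin p.1 z.1) z.2 * l01 (hlin p.2 z.1) z.2) := by
      funext z; exact (l01_key _ _ _).symm
    rw [hcong, integral_add
      (int01 (hABm p).aestronglyMeasurable (fun z => l01_nonneg _ _) (fun z => l01_le_one _ _))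
      ((intB T p).const_mul 2), integral_const_mul]
  -- Step 4': split outer integral
  have intAout : Integrable (fun p : (Fin d → ℝ) × (Fin d → ℝ) =>
      ∫ z, l01 (hlin p.1 z.1) (hlin p.2 z.1) ∂T) μ2 := hAint.integral_prod_left
  have intBoutT : Integrable (fun p : (Fin d → ℝ) × (Fin d → ℝ) =>
      ∫ z, l01 (hlin p.1 z.1) z.2 * l01 (hlin p.2 z.1) z.2 ∂T) μ2 := hBintT.integral_prod_left
  have intBoutS : Integrable (fun p : (Fin d → ℝ) × (Fin d → ℝ) =>
      ∫ z, l01 (hlin p.1 z.1) z.2 * l01 (hlin p.2 z.1) z.2 ∂S) μ2 := hBintS.integral_prod_left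
  have step4' : ∫ p : (Fin d → ℝ) × (Fin d → ℝ), (∫ z, (l01 (hlin p.1 z.1) z.2 + l01 (hlin p.2 z.1) z.2) ∂T) ∂μ2
      = (∫ p : (Fin d → ℝ) × (Fin d → ℝ), (∫ z, l01 (hlin p.1 z.1) (hlin p.2 z.1) ∂T) ∂μ2)
        + 2 * ∫ p : (Fin d → ℝ) × (Fin d → ℝ),
            (∫ z, l01 (hlin p.1 z.1) z.2 * l01 (hlin p.2 z.1) z.2 ∂T) ∂μ2 := by
    rw [integral_congr_ae (ae_of_all _ step4), integral_add intAout (intBoutT.const_mul 2),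
      integral_const_mul]
  -- Step 5: the disagreement term is expDisagLin of the marginal
  have step5 : (∫ p : (Fin d → ℝ) × (Fin d → ℝ), (∫ z, l01 (hlin p.1 z.1) (hlin p.2 z.1) ∂T) ∂μ2)
      = expDisagLin (T.map Prod.fst) w := by
    unfold expDisagLin
    refine integral_congr_ae (ae_of_all _ fun p => ?_)
    have hmm : AEStronglyMeasurable (fun x : Fin d → ℝ => l01 (hlin p.1 x) (hlin p.2 x))
        (T.map Prod.fst) :=
      (measurable_l01 (measurable_hlin.comp (measurable_const.prodMk measurable_id))
        (measurable_hlin.comp (measurable_const.prodMk measurable_id))).aestronglyMeasurable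
    exact (integral_map measurable_fst.aemeasurable hmm).symm
  -- Step 6: bound the joint error term
  set C : ℝ≥0∞ := essSup (T.rnDeriv S) S with hC
  have hwd_le : S.withDensity (T.rnDeriv S) ≤ C • S := by
    calc S.withDensity (T.rnDeriv S) ≤ S.withDensity (fun _ => C) :=
          withDensity_mono (ENNReal.ae_le_essSup _)
      _ = C • S := withDensity_const C
  haveI hCS_fin : IsFiniteMeasure (C • S) := by
    constructor
    rw [Measure.smul_apply, smul_eq_mul, measure_univ, mul_one]
    exact lt_top_iff_ne_top.mpr hβ
  have step6 : ∀ p : (Fin d → ℝ) × (Fin d → ℝ),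
      ∫ z, l01 (hlin p.1 z.1) z.2 * l01 (hlin p.2 z.1) z.2 ∂T
      ≤ etaTS S T + betaInf S T * ∫ z, l01 (hlin p.1 z.1) z.2 * l01 (hlin p.2 z.1) z.2 ∂S := by
    intro p
    have hdec : T = T.singularPart S + S.withDensity (T.rnDeriv S) :=
      by haveI : T.HaveLebesgueDecomposition S := Measure.haveLebesgueDecomposition_of_finiteMeasure; exact (T.haveLebesgueDecomposition_add S)
    have intG : ∀ (P : Measure ((Fin d → ℝ) × Bool)) [IsFiniteMeasure P], ∀ u : (Fin d → ℝ),
        Integrable (fun z : (Fin d → ℝ) × Bool => l01 (hlin u z.1) z.2) P := by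
      intro P _ u
      exact int01 (measurable_l01 (measurable_hlin.comp
        (measurable_const.prodMk measurable_fst)) measurable_snd).aestronglyMeasurable
        (fun z => l01_nonneg _ _) (fun z => l01_le_one _ _)
    have h1 : ∫ z, l01 (hlin p.1 z.1) z.2 * l01 (hlin p.2 z.1) z.2 ∂T
        = (∫ z, l01 (hlin p.1 z.1) z.2 * l01 (hlin p.2 z.1) z.2 ∂(T.singularPart S))
          + ∫ z, l01 (hlin p.1 z.1) z.2 * l01 (hlin p.2 z.1) z.2
              ∂(S.withDensity (T.rnDeriv S)) := by
      conv_lhs => rw [hdec]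
      exact integral_add_measure (intB _ p) (intB _ p)
    have h2 : (∫ z, l01 (hlin p.1 z.1) z.2 * l01 (hlin p.2 z.1) z.2 ∂(T.singularPart S))
        ≤ etaTS S T := by
      have hle1 : (∫ z, l01 (hlin p.1 z.1) z.2 * l01 (hlin p.2 z.1) z.2 ∂(T.singularPart S))
          ≤ ∫ z, l01 (hlin p.1 z.1) z.2 ∂(T.singularPart S) := by
        refine integral_mono (intB _ p) (intG _ p.1) fun z => ?_
        exact mul_le_of_le_one_right (l01_nonneg _ _) (l01_le_one _ _)
      have hbdd : BddAbove (Set.range fun w' : (Fin d → ℝ) =>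
          ∫ z, l01 (hlin w' z.1) z.2 ∂(T.singularPart S)) := by
        refine ⟨((T.singularPart S) Set.univ).toReal, ?_⟩
        rintro _ ⟨w', rfl⟩
        calc ∫ z, l01 (hlin w' z.1) z.2 ∂(T.singularPart S)
            ≤ ∫ _z, (1:ℝ) ∂(T.singularPart S) :=
              integral_mono (intG _ w') (integrable_const 1) fun z => l01_le_one _ _
          _ = ((T.singularPart S) Set.univ).toReal := by rw [integral_const, smul_eq_mul, mul_one]; rfl
      exact hle1.trans (le_ciSup hbdd p.1)
    have h3 : (∫ z, l01 (hlin p.1 z.1) z.2 * l01 (hlin p.2 z.1) z.2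
          ∂(S.withDensity (T.rnDeriv S)))
        ≤ betaInf S T * ∫ z, l01 (hlin p.1 z.1) z.2 * l01 (hlin p.2 z.1) z.2 ∂S := by
      have hmono : (∫ z, l01 (hlin p.1 z.1) z.2 * l01 (hlin p.2 z.1) z.2
            ∂(S.withDensity (T.rnDeriv S)))
          ≤ ∫ z, l01 (hlin p.1 z.1) z.2 * l01 (hlin p.2 z.1) z.2 ∂(C • S) :=
        integral_mono_measure hwd_le
          (ae_of_all _ fun z => mul_nonneg (l01_nonneg _ _) (l01_nonneg _ _)) (intB _ p)
      calc (∫ z, l01 (hlin p.1 z.1) z.2 * l01 (hlin p.2 z.1) z.2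
            ∂(S.withDensity (T.rnDeriv S)))
          ≤ ∫ z, l01 (hlin p.1 z.1) z.2 * l01 (hlin p.2 z.1) z.2 ∂(C • S) := hmono
        _ = betaInf S T * ∫ z, l01 (hlin p.1 z.1) z.2 * l01 (hlin p.2 z.1) z.2 ∂S := by
            rw [integral_smul_measure, smul_eq_mul]; rfl
    rw [h1]; exact add_le_add h2 h3
  have step6' : (∫ p : (Fin d → ℝ) × (Fin d → ℝ),
        (∫ z, l01 (hlin p.1 z.1) z.2 * l01 (hlin p.2 z.1) z.2 ∂T) ∂μ2)
      ≤ etaTS S T + betaInf S T * jointErrLin S w := by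
    have hrhs : Integrable (fun p : (Fin d → ℝ) × (Fin d → ℝ) => etaTS S T + betaInf S T *
        ∫ z, l01 (hlin p.1 z.1) z.2 * l01 (hlin p.2 z.1) z.2 ∂S) μ2 :=
      (integrable_const _).add (intBoutS.const_mul _)
    calc (∫ p : (Fin d → ℝ) × (Fin d → ℝ), (∫ z, l01 (hlin p.1 z.1) z.2 * l01 (hlin p.2 z.1) z.2 ∂T) ∂μ2)
        ≤ ∫ p : (Fin d → ℝ) × (Fin d → ℝ), (etaTS S T + betaInf S T *
            ∫ z, l01 (hlin p.1 z.1) z.2 * l01 (hlin p.2 z.1) z.2 ∂S) ∂μ2 :=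
          integral_mono intBoutT hrhs step6
      _ = etaTS S T + betaInf S T * jointErrLin S w := by
          rw [integral_add (integrable_const _) (intBoutS.const_mul _), integral_const,
            probReal_univ, one_smul, integral_const_mul]
          rfl
  -- combine
  have key : riskLin T w ≤ expDisagLin (T.map Prod.fst) w
      + 2 * (etaTS S T + betaInf S T * jointErrLin S w) := by
    calc riskLin T w ≤ _ := step2
      _ = _ := step3
      _ = _ := step4'
      _ ≤ expDisagLin (T.map Prod.fst) w + 2 * (etaTS S T + betaInf S T * jointErrLin S w) := by
          rw [step5]
          have h2 : (0:ℝ) ≤ 2 := by norm_num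
          have := mul_le_mul_of_nonneg_left step6' h2
          linarith
  linarith [key]


end
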